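/- Fixed-design random coefficient clustered model with nondegenerate design and coefficient variation: suppose λ_min(X_gᵀX_g) ≥ c′·N_g for all g, the u_g are mutually independent, independent of all the ε's, with E[u_g] = 0 and Cov(u_g) = Δ satisfying λ_min(Δ) ≥ d > 0, and the ε_g are mutually independent with mean zero. Then E‖(Σ_{g=1}^G X_gᵀε_g + Σ_{g=1}^G X_gᵀX_g u_g)/(Σ_{g=1}^G N_g)‖² ≥ E‖(Σ_{g=1}^G X_gᵀX_g u_g)/(Σ_{g=1}^G N_g)‖² ≥ d·c′² · (Σ_{g=1}^G N_g²)/(Σ_{g=1}^G N_g)². In particular, the second moment of the normalized pooled OLS score is bounded away from zero along any sequence of such models for which (Σ N_g²)/(Σ N_g)² does not tend to 0. -/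

import Mathlib

open MeasureTheory ProbabilityTheory Matrix Filter

/-- Smallest eigenvalue of a real symmetric matrix via the Rayleigh quotient. -/
noncomputable def lamMin {n : ℕ} (S : Matrix (Fin n) (Fin n) ℝ) : ℝ :=
  ⨅ v : {v : Fin n → ℝ // ∑ i, v i ^ 2 = 1}, v.1 ⬝ᵥ S.mulVec v.1

section Helpers

variable {Ωs : Type*} [MeasurableSpace Ωs] {μ : Measure Ωs}

/-- The product of two L² functions is integrable. -/
lemma integrable_mul_of_memL2 {f g : Ωs → ℝ} (hf : MemLp f 2 μ) (hg : MemLp g 2 μ) :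
    Integrable (fun ω => f ω * g ω) μ := by
  refine (hf.integrable_sq.add hg.integrable_sq).mono'
    (hf.aestronglyMeasurable.mul hg.aestronglyMeasurable)
    (Filter.Eventually.of_forall fun ω => ?_)
  simp only [Pi.add_apply]
  rw [Real.norm_eq_abs, abs_mul]
  nlinarith [sq_abs (f ω), sq_abs (g ω), abs_nonneg (f ω), abs_nonneg (g ω),
    sq_nonneg (|f ω| - |g ω|)]

lemma lamMin_le_rayleigh {n : ℕ} (S : Matrix (Fin n) (Fin n) ℝ) (v : Fin n → ℝ)
    (hv : ∑ i, v i ^ 2 = 1) : lamMin S ≤ v ⬝ᵥ S.mulVec v := by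
  have hbdd : BddBelow (Set.range fun w : {w : Fin n → ℝ // ∑ i, w i ^ 2 = 1} =>
      w.1 ⬝ᵥ S.mulVec w.1) := by
    refine ⟨-∑ i, ∑ j, |S i j|, ?_⟩
    rintro x ⟨w, rfl⟩
    have habs : ∀ i, |w.1 i| ≤ 1 := by
      intro i
      have h1 : w.1 i ^ 2 ≤ 1 := by
        have := Finset.single_le_sum (f := fun j => w.1 j ^ 2)
          (fun j _ => sq_nonneg _) (Finset.mem_univ i)
        rwa [w.2] at this
      nlinarith [sq_abs (w.1 i), abs_nonneg (w.1 i)]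
    have hterm : ∀ i j, -|S i j| ≤ w.1 i * (S i j * w.1 j) := by
      intro i j
      have h2 : |w.1 i * (S i j * w.1 j)| ≤ |S i j| := by
        rw [abs_mul, abs_mul]
        calc |w.1 i| * (|S i j| * |w.1 j|) ≤ 1 * (|S i j| * 1) := by
              exact mul_le_mul (habs i)
                (mul_le_mul_of_nonneg_left (habs j) (abs_nonneg _))
                (by positivity) zero_le_one
          _ = |S i j| := by ring
      linarith [neg_abs_le (w.1 i * (S i j * w.1 j))]
    have hsum : ∑ i, ∑ j, -|S i j| ≤ ∑ i, ∑ j, w.1 i * (S i j * w.1 j) :=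
      Finset.sum_le_sum fun i _ => Finset.sum_le_sum fun j _ => hterm i j
    show -∑ i, ∑ j, |S i j| ≤ w.1 ⬝ᵥ S.mulVec w.1
    have hrw : w.1 ⬝ᵥ S.mulVec w.1 = ∑ i, ∑ j, w.1 i * (S i j * w.1 j) := by
      simp [dotProduct, Matrix.mulVec, Finset.mul_sum]
    rw [hrw]
    calc -∑ i, ∑ j, |S i j| = ∑ i, ∑ j, -|S i j| := by
          simp
      _ ≤ _ := hsum
  exact ciInf_le hbdd ⟨v, hv⟩

lemma rayleigh_lower {n : ℕ} (S : Matrix (Fin n) (Fin n) ℝ) (w : Fin n → ℝ) :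
    lamMin S * (∑ i, w i ^ 2) ≤ w ⬝ᵥ S.mulVec w := by
  by_cases hw : ∑ i, w i ^ 2 = 0
  · have hw0 : w = 0 := by
      funext i
      have h := (Finset.sum_eq_zero_iff_of_nonneg
        (fun j _ => sq_nonneg (w j))).mp hw i (Finset.mem_univ i)
      exact pow_eq_zero_iff (two_ne_zero) |>.mp h
    subst hw0
    simp [hw]
  · have hpos : 0 < ∑ i, w i ^ 2 :=
      lt_of_le_of_ne (Finset.sum_nonneg fun i _ => sq_nonneg _) (Ne.symm hw)
    set t := Real.sqrt (∑ i, w i ^ 2) with ht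
    have ht0 : 0 < t := Real.sqrt_pos.mpr hpos
    have htt : t ^ 2 = ∑ i, w i ^ 2 := Real.sq_sqrt hpos.le
    have hv : ∑ i, (t⁻¹ • w) i ^ 2 = 1 := by
      simp only [Pi.smul_apply, smul_eq_mul, mul_pow]
      rw [← Finset.mul_sum, inv_pow, htt, inv_mul_cancel₀ hw]
    have h1 := lamMin_le_rayleigh S (t⁻¹ • w) hv
    have h2 : (t⁻¹ • w) ⬝ᵥ S.mulVec (t⁻¹ • w) = t⁻¹ * (t⁻¹ * (w ⬝ᵥ S.mulVec w)) := by
      rw [Matrix.mulVec_smul, smul_dotProduct, dotProduct_smul]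
      simp [smul_eq_mul]
    rw [h2] at h1
    have h3 : lamMin S ≤ (∑ i, w i ^ 2)⁻¹ * (w ⬝ᵥ S.mulVec w) := by
      rw [← htt, sq, mul_inv]
      calc lamMin S ≤ t⁻¹ * (t⁻¹ * (w ⬝ᵥ S.mulVec w)) := h1
        _ = t⁻¹ * t⁻¹ * (w ⬝ᵥ S.mulVec w) := by ring
    calc lamMin S * (∑ i, w i ^ 2)
        ≤ ((∑ i, w i ^ 2)⁻¹ * (w ⬝ᵥ S.mulVec w)) * (∑ i, w i ^ 2) :=
          mul_le_mul_of_nonneg_right h3 hpos.le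
      _ = w ⬝ᵥ S.mulVec w := by field_simp
end Helpers

lemma lamMin_le_diag {n : ℕ} (S : Matrix (Fin n) (Fin n) ℝ) (i : Fin n) :
    lamMin S ≤ S i i := by
  have hv : ∑ j, (Pi.single i 1 : Fin n → ℝ) j ^ 2 = 1 := by
    simp [Pi.single_apply, sq, Finset.sum_ite_eq']
  have h := lamMin_le_rayleigh S (Pi.single i 1) hv
  simpa [dotProduct, Matrix.mulVec, Pi.single_apply, mul_ite, ite_mul,
    Finset.sum_ite_eq', Finset.sum_ite_eq] using h

lemma trace_bound {k : ℕ} (hk : 1 ≤ k) (A D : Matrix (Fin k) (Fin k) ℝ) (d m : ℝ)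
    (hd0 : 0 ≤ d) (hm : 0 ≤ m) (hA : m ≤ lamMin A) (hD : d ≤ lamMin D) :
    d * m ^ 2 ≤ ∑ i, ∑ j, ∑ j', A i j * A i j' * D j j' := by
  have hrow : ∀ i : Fin k, d * (∑ j, A i j ^ 2) ≤ ∑ j, ∑ j', A i j * A i j' * D j j' := by
    intro i
    have h := rayleigh_lower D (fun j => A i j)
    have h2 : (fun j => A i j) ⬝ᵥ D.mulVec (fun j => A i j)
        = ∑ j, ∑ j', A i j * A i j' * D j j' := by
      simp only [dotProduct, Matrix.mulVec, Finset.mul_sum]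
      exact Finset.sum_congr rfl fun j _ => Finset.sum_congr rfl fun j' _ => by ring
    have hnn : (0 : ℝ) ≤ ∑ j, A i j ^ 2 := Finset.sum_nonneg fun j _ => sq_nonneg _
    calc d * (∑ j, A i j ^ 2) ≤ lamMin D * (∑ j, A i j ^ 2) :=
          mul_le_mul_of_nonneg_right hD hnn
      _ ≤ (fun j => A i j) ⬝ᵥ D.mulVec (fun j => A i j) := h
      _ = _ := h2
  have hsum : d * (∑ i, ∑ j, A i j ^ 2) ≤ ∑ i, ∑ j, ∑ j', A i j * A i j' * D j j' := by
    rw [Finset.mul_sum]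
    exact Finset.sum_le_sum fun i _ => hrow i
  set i0 : Fin k := ⟨0, hk⟩
  have hdiag : m ≤ A i0 i0 := le_trans hA (lamMin_le_diag A i0)
  have h1 : m ^ 2 ≤ A i0 i0 ^ 2 := pow_le_pow_left₀ hm hdiag 2
  have h2 : A i0 i0 ^ 2 ≤ ∑ j, A i0 j ^ 2 :=
    Finset.single_le_sum (f := fun j => A i0 j ^ 2)
      (fun j _ => sq_nonneg _) (Finset.mem_univ i0)
  have h3 : (∑ j, A i0 j ^ 2) ≤ ∑ i, ∑ j, A i j ^ 2 :=
    Finset.single_le_sum (f := fun i => ∑ j, A i j ^ 2)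
      (fun i _ => Finset.sum_nonneg fun j _ => sq_nonneg _) (Finset.mem_univ i0)
  calc d * m ^ 2 ≤ d * (∑ i, ∑ j, A i j ^ 2) :=
        mul_le_mul_of_nonneg_left (h1.trans (h2.trans h3)) hd0
    _ ≤ _ := hsum

/-- quantitative core of the paper's theorem on the
inconsistency of pooled OLS with unbalanced clusters.  If
`λ_min(X_gᵀX_g) ≥ c′·N_g` and `λ_min(Δ) ≥ d > 0`, then the normalized pooled
OLS score satisfies
`E‖(∑X_gᵀε_g + ∑X_gᵀX_g u_g)/(∑N_g)‖² ≥ E‖(∑X_gᵀX_g u_g)/(∑N_g)‖²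
  ≥ d·c′²·(∑N_g²)/(∑N_g)²`; in particular its second moment is bounded away
from zero along any sequence for which `(∑N_g²)/(∑N_g)²` does not tend to 0. -/
theorem stmt15 {Ωs : Type*} [MeasurableSpace Ωs] (μ : Measure Ωs) [IsProbabilityMeasure μ]
    (k : ℕ) (hk : 1 ≤ k) (c' d : ℝ) (hc' : 0 < c') (hd : 0 < d)
    (N : (G : ℕ) → Fin G → ℕ) (hN : ∀ G g, 1 ≤ N G g)
    (X : (G : ℕ) → (g : Fin G) → Matrix (Fin (N G g)) (Fin k) ℝ)
    (ε : (G : ℕ) → (g : Fin G) → Ωs → (Fin (N G g) → ℝ))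
    (u : (G : ℕ) → (g : Fin G) → Ωs → (Fin k → ℝ))
    (hmeasε : ∀ G g, Measurable (ε G g)) (hmeasu : ∀ G g, Measurable (u G g))
    (hL2ε : ∀ G g i, Integrable (fun ω => (ε G g ω i) ^ 2) μ)
    (hL2u : ∀ G g i, Integrable (fun ω => (u G g ω i) ^ 2) μ)
    (hmeanε : ∀ G g i, ∫ ω, ε G g ω i ∂μ = 0)
    (hmeanu : ∀ G g i, ∫ ω, u G g ω i ∂μ = 0)
    (hindepε : ∀ G, iIndepFun (ε G) μ)
    (hindepu : ∀ G, iIndepFun (u G) μ)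
    (hindepεu : ∀ G, IndepFun (fun ω (g : Fin G) => ε G g ω)
                              (fun ω (g : Fin G) => u G g ω) μ)
    (Δ : Matrix (Fin k) (Fin k) ℝ)
    (hΔ : ∀ G g i j, ∫ ω, u G g ω i * u G g ω j ∂μ = Δ i j)
    (hXeig : ∀ G g, c' * (N G g : ℝ) ≤ lamMin ((X G g)ᵀ * X G g))
    (hΔeig : d ≤ lamMin Δ)
    (score uscore : (G : ℕ) → Ωs → (Fin k → ℝ))
    (hscore : ∀ G ω, score G ω =
      ((∑ g, (N G g : ℝ)))⁻¹ •
        ((∑ g, (X G g)ᵀ.mulVec (ε G g ω)) +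
         ∑ g, ((X G g)ᵀ * X G g).mulVec (u G g ω)))
    (huscore : ∀ G ω, uscore G ω =
      ((∑ g, (N G g : ℝ)))⁻¹ • ∑ g, ((X G g)ᵀ * X G g).mulVec (u G g ω)) :
    (∀ G : ℕ, 1 ≤ G →
      ∫ ω, ∑ i, (uscore G ω i) ^ 2 ∂μ ≤ ∫ ω, ∑ i, (score G ω i) ^ 2 ∂μ) ∧
    (∀ G : ℕ, 1 ≤ G →
      d * c' ^ 2 * (∑ g, (N G g : ℝ) ^ 2) / (∑ g, (N G g : ℝ)) ^ 2 ≤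
        ∫ ω, ∑ i, (uscore G ω i) ^ 2 ∂μ) ∧
    (¬ Tendsto (fun G : ℕ => (∑ g, (N G g : ℝ) ^ 2) / (∑ g, (N G g : ℝ)) ^ 2)
        atTop (nhds 0) →
      ¬ Tendsto (fun G : ℕ => ∫ ω, ∑ i, (score G ω i) ^ 2 ∂μ) atTop (nhds 0)) := by
  classical
  -- coordinates of u and ε are in L²
  have hu2 : ∀ (G : ℕ) (g : Fin G) (j : Fin k),
      MemLp (fun ω => u G g ω j) 2 μ := fun G g j =>
    (memLp_two_iff_integrable_sq
      (((measurable_pi_apply j).comp (hmeasu G g)).aestronglyMeasurable)).mpr (hL2u G g j)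
  have hε2 : ∀ (G : ℕ) (g : Fin G) (r : Fin (N G g)),
      MemLp (fun ω => ε G g ω r) 2 μ := fun G g r =>
    (memLp_two_iff_integrable_sq
      (((measurable_pi_apply r).comp (hmeasε G g)).aestronglyMeasurable)).mpr (hL2ε G g r)
  -- the per-G analysis
  have main : ∀ G : ℕ,
      (∫ ω, ∑ i, (uscore G ω i) ^ 2 ∂μ ≤ ∫ ω, ∑ i, (score G ω i) ^ 2 ∂μ) ∧
      ((∑ g : Fin G, (N G g : ℝ))⁻¹ ^ 2 * (d * c' ^ 2 * ∑ g, (N G g : ℝ) ^ 2) ≤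
        ∫ ω, ∑ i, (uscore G ω i) ^ 2 ∂μ) := by
    intro G
    set A : Fin G → Matrix (Fin k) (Fin k) ℝ := fun g => (X G g)ᵀ * X G g with hA
    set cinv : ℝ := (∑ g : Fin G, (N G g : ℝ))⁻¹ with hcinv
    set Su : Fin k → Ωs → ℝ := fun i ω => ∑ g, ∑ j, A g i j * u G g ω j with hSu
    set Sε : Fin k → Ωs → ℝ := fun i ω => ∑ g, ∑ r, (X G g)ᵀ i r * ε G g ω r with hSε
    -- per-cluster summand for u
    set w : Fin k → Fin G → Ωs → ℝ := fun i g ω => ∑ j, A g i j * u G g ω j with hw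
    have hw2 : ∀ i g, MemLp (w i g) 2 μ := fun i g =>
      memLp_finset_sum _ fun j _ => (hu2 G g j).const_mul _
    have hSu2 : ∀ i, MemLp (Su i) 2 μ := fun i =>
      memLp_finset_sum _ fun g _ => hw2 i g
    have hSε2 : ∀ i, MemLp (Sε i) 2 μ := fun i =>
      memLp_finset_sum _ fun g _ =>
        memLp_finset_sum _ fun r _ => (hε2 G g r).const_mul _
    -- means are zero
    have hwmean : ∀ i g, ∫ ω, w i g ω ∂μ = 0 := by
      intro i g
      rw [integral_finset_sum _ fun j _ =>
        ((hu2 G g j).integrable one_le_two).const_mul _]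
      refine Finset.sum_eq_zero fun j _ => ?_
      rw [integral_const_mul, hmeanu G g j, mul_zero]
    have hSumean : ∀ i, ∫ ω, Su i ω ∂μ = 0 := by
      intro i
      rw [integral_finset_sum _ fun g _ => (hw2 i g).integrable one_le_two]
      exact Finset.sum_eq_zero fun g _ => hwmean i g
    have hSεmean : ∀ i, ∫ ω, Sε i ω ∂μ = 0 := by
      intro i
      rw [integral_finset_sum _ fun g _ =>
        integrable_finset_sum _ fun r _ =>
          ((hε2 G g r).integrable one_le_two).const_mul _]
      refine Finset.sum_eq_zero fun g _ => ?_
      rw [integral_finset_sum _ fun r _ =>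
        ((hε2 G g r).integrable one_le_two).const_mul _]
      refine Finset.sum_eq_zero fun r _ => ?_
      rw [integral_const_mul, hmeanε G g r, mul_zero]
    -- coordinate description of score/uscore
    have huc : ∀ ω i, uscore G ω i = cinv * Su i ω := by
      intro ω i
      rw [huscore]
      simp [hSu, hA, hcinv, Matrix.mulVec, dotProduct, Finset.sum_apply]
    have hsc : ∀ ω i, score G ω i = cinv * (Sε i ω + Su i ω) := by
      intro ω i
      rw [hscore]
      simp [hSu, hSε, hA, hcinv, Matrix.mulVec, dotProduct, Finset.sum_apply]
    -- integrals of squares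
    have hMu : ∫ ω, ∑ i, (uscore G ω i) ^ 2 ∂μ
        = cinv ^ 2 * ∑ i, ∫ ω, (Su i ω) ^ 2 ∂μ := by
      have hpt : ∀ ω, ∑ i, (uscore G ω i) ^ 2 = cinv ^ 2 * ∑ i, (Su i ω) ^ 2 := by
        intro ω
        rw [Finset.mul_sum]
        exact Finset.sum_congr rfl fun i _ => by rw [huc]; ring
      simp_rw [hpt]
      rw [integral_const_mul, integral_finset_sum _ fun i _ => (hSu2 i).integrable_sq]
    have hMs : ∫ ω, ∑ i, (score G ω i) ^ 2 ∂μ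
        = cinv ^ 2 * ∑ i, ∫ ω, (Sε i ω + Su i ω) ^ 2 ∂μ := by
      have hpt : ∀ ω, ∑ i, (score G ω i) ^ 2
          = cinv ^ 2 * ∑ i, (Sε i ω + Su i ω) ^ 2 := by
        intro ω
        rw [Finset.mul_sum]
        exact Finset.sum_congr rfl fun i _ => by rw [hsc]; ring
      have hint : ∀ i : Fin k, Integrable (fun ω => (Sε i ω + Su i ω) ^ 2) μ := by
        intro i
        have := ((hSε2 i).add (hSu2 i)).integrable_sq
        simpa [Pi.add_apply] using this
      simp_rw [hpt]
      rw [integral_const_mul, integral_finset_sum _ fun i _ => hint i]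
    -- the cross term vanishes
    have hcross : ∀ i, ∫ ω, Sε i ω * Su i ω ∂μ = 0 := by
      intro i
      have hφ : Measurable (fun y : (∀ g : Fin G, Fin (N G g) → ℝ) =>
          ∑ g, ∑ r, (X G g)ᵀ i r * y g r) := by
        refine Finset.measurable_sum _ fun g _ => Finset.measurable_sum _ fun r _ => ?_
        have hev : Measurable (fun y : (∀ g : Fin G, Fin (N G g) → ℝ) => y g r) :=
          (measurable_pi_apply r).comp (measurable_pi_apply g)
        exact hev.const_mul _
      have hψ : Measurable (fun y : Fin G → Fin k → ℝ =>
          ∑ g, ∑ j, A g i j * y g j) := by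
        refine Finset.measurable_sum _ fun g _ => Finset.measurable_sum _ fun j _ => ?_
        have hev : Measurable (fun y : Fin G → Fin k → ℝ => y g j) :=
          (measurable_pi_apply j).comp (measurable_pi_apply g)
        exact hev.const_mul _
      have hind : IndepFun (Sε i) (Su i) μ := (hindepεu G).comp hφ hψ
      calc ∫ ω, Sε i ω * Su i ω ∂μ = integral μ (Sε i * Su i) := rfl
        _ = 0 := by
          rw [hind.integral_mul_eq_mul_integral ((hSε2 i).integrable one_le_two).aestronglyMeasurable
            ((hSu2 i).integrable one_le_two).aestronglyMeasurable, hSεmean, hSumean, mul_zero]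
    -- Part 1 inequality, coordinatewise
    have hpart1 : ∫ ω, ∑ i, (uscore G ω i) ^ 2 ∂μ
        ≤ ∫ ω, ∑ i, (score G ω i) ^ 2 ∂μ := by
      rw [hMu, hMs]
      refine mul_le_mul_of_nonneg_left (Finset.sum_le_sum fun i _ => ?_) (sq_nonneg _)
      have hexp : ∫ ω, (Sε i ω + Su i ω) ^ 2 ∂μ
          = (∫ ω, (Sε i ω) ^ 2 ∂μ)
            + ((2 : ℝ) * ∫ ω, Sε i ω * Su i ω ∂μ + ∫ ω, (Su i ω) ^ 2 ∂μ) := by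
        have hpt : ∀ ω, (Sε i ω + Su i ω) ^ 2
            = (Sε i ω) ^ 2 + (2 * (Sε i ω * Su i ω) + (Su i ω) ^ 2) :=
          fun ω => by ring
        have hab : Integrable (fun ω => 2 * (Sε i ω * Su i ω)) μ :=
          (integrable_mul_of_memL2 (hSε2 i) (hSu2 i)).const_mul 2
        have habb : Integrable (fun ω => 2 * (Sε i ω * Su i ω) + Su i ω ^ 2) μ :=
          hab.add (hSu2 i).integrable_sq
        simp_rw [hpt]
        rw [integral_add (hSε2 i).integrable_sq habb,
          integral_add hab (hSu2 i).integrable_sq, integral_const_mul]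
      rw [hexp, hcross i]
      have h0 : (0 : ℝ) ≤ ∫ ω, (Sε i ω) ^ 2 ∂μ :=
        integral_nonneg fun ω => sq_nonneg _
      linarith
    -- Part 2: compute the second moment of Su
    have hwcross : ∀ i (g g' : Fin G), g ≠ g' → ∫ ω, w i g ω * w i g' ω ∂μ = 0 := by
      intro i g g' hne
      have hφ : ∀ g : Fin G, Measurable (fun y : Fin k → ℝ => ∑ j, A g i j * y j) :=
        fun g => Finset.measurable_sum _ fun j _ =>
          (measurable_pi_apply j).const_mul _
      have hind : IndepFun (w i g) (w i g') μ :=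
        ((hindepu G).indepFun hne).comp (hφ g) (hφ g')
      calc ∫ ω, w i g ω * w i g' ω ∂μ = integral μ (w i g * w i g') := rfl
        _ = 0 := by
          rw [hind.integral_mul_eq_mul_integral ((hw2 i g).integrable one_le_two).aestronglyMeasurable
            ((hw2 i g').integrable one_le_two).aestronglyMeasurable, hwmean, hwmean, mul_zero]
    have hwdiag : ∀ i (g : Fin G),
        ∫ ω, w i g ω * w i g ω ∂μ = ∑ j, ∑ j', A g i j * A g i j' * Δ j j' := by
      intro i g
      have hpt : ∀ ω, w i g ω * w i g ω
          = ∑ j, ∑ j', (A g i j * A g i j') * (u G g ω j * u G g ω j') := by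
        intro ω
        simp only [hw]
        rw [Finset.sum_mul_sum]
        exact Finset.sum_congr rfl fun j _ => Finset.sum_congr rfl fun j' _ => by ring
      have hint : ∀ j j' : Fin k,
          Integrable (fun ω => (A g i j * A g i j') * (u G g ω j * u G g ω j')) μ :=
        fun j j' => (integrable_mul_of_memL2 (hu2 G g j) (hu2 G g j')).const_mul _
      simp_rw [hpt]
      rw [integral_finset_sum
        (f := fun j ω => ∑ j', (A g i j * A g i j') * (u G g ω j * u G g ω j')) _
        (fun j _ => integrable_finset_sum _ fun j' _ => hint j j')]
      refine Finset.sum_congr rfl fun j _ => ?_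
      rw [integral_finset_sum
        (f := fun j' ω => (A g i j * A g i j') * (u G g ω j * u G g ω j')) _
        (fun j' _ => hint j j')]
      exact Finset.sum_congr rfl fun j' _ => by
        rw [integral_const_mul, hΔ G g j j']
    have hSusq : ∀ i, ∫ ω, (Su i ω) ^ 2 ∂μ
        = ∑ g, ∑ j, ∑ j', A g i j * A g i j' * Δ j j' := by
      intro i
      have hpt : ∀ ω, (Su i ω) ^ 2 = ∑ g, ∑ g', w i g ω * w i g' ω := by
        intro ω
        simp only [hSu, hw]
        rw [sq]
        exact Finset.sum_mul_sum _ _ _ _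
      have hint : ∀ g g' : Fin G,
          Integrable (fun ω => w i g ω * w i g' ω) μ :=
        fun g g' => integrable_mul_of_memL2 (hw2 i g) (hw2 i g')
      simp_rw [hpt]
      rw [integral_finset_sum (f := fun g ω => ∑ g', w i g ω * w i g' ω) _
        (fun g _ => integrable_finset_sum _ fun g' _ => hint g g')]
      refine Finset.sum_congr rfl fun g _ => ?_
      rw [integral_finset_sum (f := fun g' ω => w i g ω * w i g' ω) _
        (fun g' _ => hint g g')]
      rw [Finset.sum_eq_single_of_mem g (Finset.mem_univ g)
        (fun g' _ hne => hwcross i g g' (Ne.symm hne))]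
      exact hwdiag i g
    have hpart2 : cinv ^ 2 * (d * c' ^ 2 * ∑ g, (N G g : ℝ) ^ 2)
        ≤ ∫ ω, ∑ i, (uscore G ω i) ^ 2 ∂μ := by
      rw [hMu]
      refine mul_le_mul_of_nonneg_left ?_ (sq_nonneg _)
      have hswap : ∑ i, ∫ ω, (Su i ω) ^ 2 ∂μ
          = ∑ g : Fin G, ∑ i, ∑ j, ∑ j', A g i j * A g i j' * Δ j j' := by
        simp_rw [hSusq]
        exact Finset.sum_comm
      rw [hswap]
      have hper : ∀ g : Fin G, d * (c' * (N G g : ℝ)) ^ 2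
          ≤ ∑ i, ∑ j, ∑ j', A g i j * A g i j' * Δ j j' := by
        intro g
        refine trace_bound hk (A g) Δ d (c' * (N G g : ℝ)) hd.le ?_ (hXeig G g) hΔeig
        positivity
      calc d * c' ^ 2 * ∑ g, (N G g : ℝ) ^ 2
          = ∑ g : Fin G, d * (c' * (N G g : ℝ)) ^ 2 := by
            rw [Finset.mul_sum]
            exact Finset.sum_congr rfl fun g _ => by ring
        _ ≤ _ := Finset.sum_le_sum fun g _ => hper g
    exact ⟨hpart1, hpart2⟩
  refine ⟨fun G _ => (main G).1, ?_, ?_⟩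
  · intro G hG
    have hNpos : 0 < ∑ g : Fin G, (N G g : ℝ) := by
      have : Nonempty (Fin G) := ⟨⟨0, hG⟩⟩
      refine Finset.sum_pos (fun g _ => ?_) Finset.univ_nonempty
      exact_mod_cast Nat.lt_of_lt_of_le Nat.zero_lt_one (hN G g)
    have h := (main G).2
    have heq : d * c' ^ 2 * (∑ g, (N G g : ℝ) ^ 2) / (∑ g, (N G g : ℝ)) ^ 2
        = (∑ g : Fin G, (N G g : ℝ))⁻¹ ^ 2 * (d * c' ^ 2 * ∑ g, (N G g : ℝ) ^ 2) := by
      rw [div_eq_mul_inv, ← inv_pow]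
      ring
    rw [heq]
    exact h
  · intro hratio hs
    apply hratio
    have hub : ∀ᶠ G : ℕ in atTop,
        (∑ g, (N G g : ℝ) ^ 2) / (∑ g, (N G g : ℝ)) ^ 2
          ≤ (d * c' ^ 2)⁻¹ * ∫ ω, ∑ i, (score G ω i) ^ 2 ∂μ := by
      filter_upwards [eventually_ge_atTop 1] with G hG
      have hNpos : 0 < ∑ g : Fin G, (N G g : ℝ) := by
        have : Nonempty (Fin G) := ⟨⟨0, hG⟩⟩
        refine Finset.sum_pos (fun g _ => ?_) Finset.univ_nonempty
        exact_mod_cast Nat.lt_of_lt_of_le Nat.zero_lt_one (hN G g)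
      have h2 := (main G).2
      have h1 := (main G).1
      have heq : d * c' ^ 2 * (∑ g, (N G g : ℝ) ^ 2) / (∑ g, (N G g : ℝ)) ^ 2
          = (∑ g : Fin G, (N G g : ℝ))⁻¹ ^ 2 * (d * c' ^ 2 * ∑ g, (N G g : ℝ) ^ 2) := by
        rw [div_eq_mul_inv, ← inv_pow]
        ring
      have hchain : d * c' ^ 2 * (∑ g, (N G g : ℝ) ^ 2) / (∑ g, (N G g : ℝ)) ^ 2
          ≤ ∫ ω, ∑ i, (score G ω i) ^ 2 ∂μ := by
        rw [heq]; exact h2.trans h1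
      have hpos : (0 : ℝ) < d * c' ^ 2 := by positivity
      rw [mul_div_assoc] at hchain
      calc (∑ g, (N G g : ℝ) ^ 2) / (∑ g, (N G g : ℝ)) ^ 2
          = (d * c' ^ 2)⁻¹ * (d * c' ^ 2 *
            ((∑ g, (N G g : ℝ) ^ 2) / (∑ g, (N G g : ℝ)) ^ 2)) := by
            field_simp
        _ ≤ (d * c' ^ 2)⁻¹ * ∫ ω, ∑ i, (score G ω i) ^ 2 ∂μ :=
            mul_le_mul_of_nonneg_left hchain (by positivity)
    have hlb : ∀ᶠ G : ℕ in atTop,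
        (0 : ℝ) ≤ (∑ g, (N G g : ℝ) ^ 2) / (∑ g, (N G g : ℝ)) ^ 2 :=
      Eventually.of_forall fun G => by positivity
    have hlim : Tendsto (fun G : ℕ => (d * c' ^ 2)⁻¹ * ∫ ω, ∑ i, (score G ω i) ^ 2 ∂μ)
        atTop (nhds 0) := by
      have := hs.const_mul ((d * c' ^ 2)⁻¹)
      simpa using this
    exact tendsto_of_tendsto_of_tendsto_of_le_of_le' tendsto_const_nhds hlim hlb hub
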